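/- Let (W,S) be a Coxeter system, J ⊆ S, and w ∈ W. Then the set W_J ∩ [e,w] (elements of the parabolic subgroup W_J that are ≤ w in Bruhat order) has a unique maximal element w₀(J); consequently W_J ∩ [e,w] is the Bruhat interval [e, w₀(J)]. -/

import Mathlib

open CoxeterSystem

variable {B W : Type*} [Group W] {Cm : CoxeterMatrix B} (cs : CoxeterSystem Cm W)

/-- Bruhat order on the Coxeter group `W`: the reflexive-transitive closure of the
relation "multiply on the right by a reflection, increasing the length". -/
def bruhatLE : W → W → Prop :=
  Relation.ReflTransGen (fun u v => (∃ t, cs.IsReflection t ∧ v = u * t) ∧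
    cs.length u < cs.length v)

/-- The covering relation of Bruhat order: `u ⋖ v` iff `u⁻¹v` is a reflection and
`ℓ(v) = ℓ(u) + 1`. -/
def bruhatCovBy (u v : W) : Prop :=
  cs.IsReflection (u⁻¹ * v) ∧ cs.length v = cs.length u + 1

/-- The standard parabolic subgroup `W_J` generated by the simple reflections
indexed by `J`. -/
def parabolic (J : Set B) : Subgroup W := Subgroup.closure (cs.simple '' J)

/-- `w` belongs to the set `W^J` of minimal length coset representatives of `W/W_J`. -/
def isMinimalRight (J : Set B) (w : W) : Prop := ∀ j ∈ J, ¬ cs.IsRightDescent w j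

/-- `w` belongs to the set `^J W` of minimal length coset representatives of `W_J\W`. -/
def isMinimalLeft (J : Set B) (w : W) : Prop := ∀ j ∈ J, ¬ cs.IsLeftDescent w j

/-! ### Auxiliary development -/

namespace CoxAux

open List

/-- The relation generating Bruhat order. -/
def brel : W → W → Prop := fun u v => (∃ t, cs.IsReflection t ∧ v = u * t) ∧
    cs.length u < cs.length v

lemma bruhatLE_iff {u w : W} :
    bruhatLE cs u w ↔ Relation.ReflTransGen (brel cs) u w := Iff.rfl

/-! #### ZMod 2 facts -/

lemma zmod2_add_self (x : ZMod 2) : x + x = 0 := by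
  have : ∀ y : ZMod 2, y + y = 0 := by decide
  exact this x

lemma zmod2_cases (x : ZMod 2) : x = 0 ∨ x = 1 := by
  have : ∀ y : ZMod 2, y = 0 ∨ y = 1 := by decide
  exact this x

lemma zmod2_eq_of_add_eq_zero {x y : ZMod 2} (h : x + y = 0) : x = y := by
  have : ∀ a b : ZMod 2, a + b = 0 → a = b := by decide
  exact this x y h

/-! #### The sign function and permutation representation -/

open Classical in
/-- Indicator of equality, valued in `ZMod 2`. -/
noncomputable def bsgn (a b : W) : ZMod 2 := if a = b then 1 else 0

lemma bsgn_self (a : W) : bsgn a a = 1 := by simp [bsgn]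

lemma bsgn_congr {a b a' b' : W} (h : a = b ↔ a' = b') : bsgn a b = bsgn a' b' := by
  classical
  by_cases hc : a = b
  · simp [bsgn, hc, h.mp hc]
  · have hc' : ¬ a' = b' := fun hx => hc (h.mpr hx)
    simp [bsgn, hc, hc']

lemma bsgn_eq_zero {a b : W} (h : a ≠ b) : bsgn a b = 0 := by simp [bsgn, h]

/-- Sum of the indicators of equality with `t` over a list. -/
noncomputable def bsum (t : W) (l : List W) : ZMod 2 := (l.map (bsgn t)).sum

lemma bsum_nil (t : W) : bsum t [] = 0 := rfl

lemma bsum_cons (t a : W) (l : List W) : bsum t (a :: l) = bsgn t a + bsum t l := by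
  simp [bsum]

lemma bsum_eq_zero {t : W} {l : List W} (h : t ∉ l) : bsum t l = 0 := by
  induction l with
  | nil => rfl
  | cons a l ih =>
    have h1 : t ≠ a := fun he => h (by rw [he]; exact List.mem_cons_self)
    rw [bsum_cons, bsgn_eq_zero h1,
      ih (fun hm => h (List.mem_cons_of_mem a hm)), add_zero]

/-- The basic permutation associated to a simple reflection. -/
noncomputable def bphi (i : B) : Equiv.Perm (W × ZMod 2) where
  toFun x := (cs.simple i * x.1 * cs.simple i, x.2 + bsgn x.1 (cs.simple i))
  invFun x := (cs.simple i * x.1 * cs.simple i, x.2 + bsgn x.1 (cs.simple i))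
  left_inv := by
    rintro ⟨t, ε⟩
    have h1 : cs.simple i * (cs.simple i * t * cs.simple i) * cs.simple i = t := by
      have e : cs.simple i * (cs.simple i * t * cs.simple i) * cs.simple i =
          cs.simple i * (cs.simple i * (t * cs.simple i)) * cs.simple i := by group
      rw [e, cs.simple_mul_simple_cancel_left, cs.simple_mul_simple_cancel_right]
    have h2 : bsgn (cs.simple i * t * cs.simple i) (cs.simple i) = bsgn t (cs.simple i) := by
      apply bsgn_congr
      constructor
      · intro h
        have h' := congrArg (fun x => cs.simple i * x * cs.simple i) h
        rw [h1] at h'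
        rw [h', cs.simple_mul_simple_self, one_mul]
      · intro h; rw [h, cs.simple_mul_simple_self, one_mul]
    simp only [h1, h2]
    rw [Prod.mk.injEq]
    exact ⟨rfl, by rw [add_assoc, zmod2_add_self, add_zero]⟩
  right_inv := by
    rintro ⟨t, ε⟩
    have h1 : cs.simple i * (cs.simple i * t * cs.simple i) * cs.simple i = t := by
      have e : cs.simple i * (cs.simple i * t * cs.simple i) * cs.simple i =
          cs.simple i * (cs.simple i * (t * cs.simple i)) * cs.simple i := by group
      rw [e, cs.simple_mul_simple_cancel_left, cs.simple_mul_simple_cancel_right]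
    have h2 : bsgn (cs.simple i * t * cs.simple i) (cs.simple i) = bsgn t (cs.simple i) := by
      apply bsgn_congr
      constructor
      · intro h
        have h' := congrArg (fun x => cs.simple i * x * cs.simple i) h
        rw [h1] at h'
        rw [h', cs.simple_mul_simple_self, one_mul]
      · intro h; rw [h, cs.simple_mul_simple_self, one_mul]
    simp only [h1, h2]
    rw [Prod.mk.injEq]
    exact ⟨rfl, by rw [add_assoc, zmod2_add_self, add_zero]⟩

/-- The dihedral reflection sequence. -/
noncomputable def br (i j : B) (k : ℕ) : W := (cs.simple j * cs.simple i) ^ k * cs.simple j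

lemma br_shift (i j : B) (k : ℕ) :
    (cs.simple j * cs.simple i) * br cs i j k * (cs.simple i * cs.simple j) = br cs i j (k + 2) := by
  have hinv : cs.simple i * cs.simple j = (cs.simple j * cs.simple i)⁻¹ := by
    rw [mul_inv_rev, cs.inv_simple, cs.inv_simple]
  set a := cs.simple j * cs.simple i with ha
  have hb : cs.simple j * a⁻¹ = a * cs.simple j := by
    rw [ha, mul_inv_rev, cs.inv_simple, cs.inv_simple]
    group
  calc a * (a ^ k * cs.simple j) * (cs.simple i * cs.simple j)
      = a * a ^ k * (cs.simple j * a⁻¹) := by rw [hinv]; group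
    _ = a * a ^ k * (a * cs.simple j) := by rw [hb]
    _ = a ^ (k + 1) * a * cs.simple j := by rw [← pow_succ']; group
    _ = a ^ (k + 2) * cs.simple j := by rw [← pow_succ]

lemma bphi_mul_apply (i j : B) (t : W) (ε : ZMod 2) :
    (bphi cs i * bphi cs j) (t, ε) =
      ((cs.simple i * cs.simple j) * t * (cs.simple i * cs.simple j)⁻¹,
        ε + bsgn t (br cs i j 0) + bsgn t (br cs i j 1)) := by
  have hinv : (cs.simple i * cs.simple j)⁻¹ = cs.simple j * cs.simple i := by
    rw [mul_inv_rev, cs.inv_simple, cs.inv_simple]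
  rw [Equiv.Perm.mul_apply]
  show bphi cs i (cs.simple j * t * cs.simple j, ε + bsgn t (cs.simple j)) = _
  show (cs.simple i * (cs.simple j * t * cs.simple j) * cs.simple i,
      ε + bsgn t (cs.simple j) + bsgn (cs.simple j * t * cs.simple j) (cs.simple i)) = _
  rw [Prod.mk.injEq]
  constructor
  · rw [hinv]; group
  · congr 1
    · congr 1
      apply bsgn_congr
      simp [br]
    · apply bsgn_congr
      have hr : br cs i j 1 = cs.simple j * cs.simple i * cs.simple j := by
        simp [br, pow_one]
      rw [hr]
      constructor
      · intro h
        have := congrArg (fun x => cs.simple j * x * cs.simple j) h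
        have e : cs.simple j * (cs.simple j * t * cs.simple j) * cs.simple j = t := by
          have e' : cs.simple j * (cs.simple j * t * cs.simple j) * cs.simple j =
              cs.simple j * (cs.simple j * (t * cs.simple j)) * cs.simple j := by group
          rw [e', cs.simple_mul_simple_cancel_left, cs.simple_mul_simple_cancel_right]
        rw [e] at this
        rw [this]
      · intro h
        rw [h]
        have e' : cs.simple j * (cs.simple j * cs.simple i * cs.simple j) * cs.simple j =
            cs.simple j * (cs.simple j * (cs.simple i * cs.simple j)) * cs.simple j := by group
        rw [e', cs.simple_mul_simple_cancel_left, cs.simple_mul_simple_cancel_right]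

lemma bphi_pow_apply (i j : B) (n : ℕ) : ∀ (t : W) (ε : ZMod 2),
    ((bphi cs i * bphi cs j) ^ n) (t, ε) =
      ((cs.simple i * cs.simple j) ^ n * t * ((cs.simple i * cs.simple j) ^ n)⁻¹,
        ε + ∑ k ∈ Finset.range (2 * n), bsgn t (br cs i j k)) := by
  induction n with
  | zero => intro t ε; simp
  | succ n ih =>
    intro t ε
    rw [pow_succ, Equiv.Perm.mul_apply, bphi_mul_apply, ih]
    have hinv : (cs.simple i * cs.simple j)⁻¹ = cs.simple j * cs.simple i := by
      rw [mul_inv_rev, cs.inv_simple, cs.inv_simple]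
    rw [Prod.mk.injEq]
    constructor
    · rw [pow_succ, mul_inv_rev]
      group
    · have hcongr : ∀ k : ℕ,
          bsgn ((cs.simple i * cs.simple j) * t * (cs.simple i * cs.simple j)⁻¹) (br cs i j k)
            = bsgn t (br cs i j (k + 2)) := by
        intro k
        apply bsgn_congr
        rw [← br_shift cs i j k]
        constructor
        · intro h
          rw [← h, ← hinv]
          group
        · intro h
          rw [h, ← hinv]
          group
      have hs := Finset.sum_congr rfl (fun k (_ : k ∈ Finset.range (2*n)) => hcongr k)
      rw [hs]
      have h2 : 2 * (n + 1) = (2 * n + 1) + 1 := by ring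
      rw [h2, Finset.sum_range_succ', Finset.sum_range_succ']
      have hz : (0 : ℕ) + 1 = 1 := rfl
      simp only [hz]
      abel

lemma bphi_liftable : CoxeterMatrix.IsLiftable Cm (fun i => bphi cs i) := by
  intro i j
  apply Equiv.ext
  rintro ⟨t, ε⟩
  simp only
  rw [bphi_pow_apply, cs.simple_mul_simple_pow i j]
  have hsum : ∑ k ∈ Finset.range (2 * Cm i j), bsgn t (br cs i j k) = 0 := by
    rw [two_mul, Finset.sum_range_add]
    have hper : ∀ k : ℕ, br cs i j (Cm i j + k) = br cs i j k := by
      intro k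
      simp only [br, pow_add, cs.simple_mul_simple_pow' i j, one_mul]
    have hs := Finset.sum_congr rfl
      (fun k (_ : k ∈ Finset.range (Cm i j)) => congrArg (bsgn t) (hper k))
    rw [hs]
    exact zmod2_add_self _
  rw [hsum, add_zero]
  simp

/-- The permutation representation of `W` on `W × ZMod 2`. -/
noncomputable def bPhi : W →* Equiv.Perm (W × ZMod 2) :=
  cs.lift ⟨fun i => bphi cs i, bphi_liftable cs⟩

lemma bPhi_simple (i : B) : bPhi cs (cs.simple i) = bphi cs i :=
  cs.lift_apply_simple (bphi_liftable cs) i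

lemma bPhi_wordProd (ω : List B) (t : W) (ε : ZMod 2) :
    bPhi cs (cs.wordProd ω) (t, ε) =
      (cs.wordProd ω * t * (cs.wordProd ω)⁻¹, ε + bsum t (cs.rightInvSeq ω)) := by
  induction ω with
  | nil => simp [bsum_nil]
  | cons i ω ih =>
    rw [cs.wordProd_cons, map_mul, Equiv.Perm.mul_apply, ih, bPhi_simple]
    set w := cs.wordProd ω with hw
    show (cs.simple i * (w * t * w⁻¹) * cs.simple i,
        (ε + bsum t (cs.rightInvSeq ω)) + bsgn (w * t * w⁻¹) (cs.simple i)) = _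
    have hris : cs.rightInvSeq (i :: ω) = (w⁻¹ * cs.simple i * w) :: cs.rightInvSeq ω := by
      rw [CoxeterSystem.rightInvSeq]
    rw [hris, bsum_cons, Prod.mk.injEq]
    constructor
    · rw [mul_inv_rev, cs.inv_simple]
      group
    · have hb : bsgn (w * t * w⁻¹) (cs.simple i) = bsgn t (w⁻¹ * cs.simple i * w) := by
        apply bsgn_congr
        constructor
        · intro h; rw [← h]; group
        · intro h; rw [h]; group
      rw [hb]
      abel

/-- The sign of `t` under the action of `w`. -/
noncomputable def bc (w t : W) : ZMod 2 := (bPhi cs w (t, 0)).2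

lemma bc_wordProd (ω : List B) (t : W) :
    bc cs (cs.wordProd ω) t = bsum t (cs.rightInvSeq ω) := by
  show (bPhi cs (cs.wordProd ω) (t, 0)).2 = _
  rw [bPhi_wordProd]
  exact zero_add _

lemma bPhi_apply (w t : W) (ε : ZMod 2) :
    bPhi cs w (t, ε) = (w * t * w⁻¹, ε + bc cs w t) := by
  obtain ⟨ω, rfl⟩ := cs.wordProd_surjective w
  rw [bPhi_wordProd, bc_wordProd]

lemma bc_inv_conj (x y : W) : bc cs x⁻¹ (x * y * x⁻¹) = bc cs x y := by
  have h : bPhi cs x⁻¹ (bPhi cs x (y, 0)) = (y, 0) := by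
    rw [← Equiv.Perm.mul_apply, ← map_mul]
    rw [show x⁻¹ * x = 1 by group, map_one]
    rfl
  rw [bPhi_apply, bPhi_apply] at h
  have h2 := congrArg Prod.snd h
  simp only [zero_add] at h2
  exact (zmod2_eq_of_add_eq_zero h2).symm

lemma bPhi_reflection_self {t : W} (ht : cs.IsReflection t) (ε : ZMod 2) :
    bPhi cs t (t, ε) = (t, ε + 1) := by
  obtain ⟨w, i, rfl⟩ := ht
  have e1 : bPhi cs (w * cs.simple i * w⁻¹) ((w * cs.simple i * w⁻¹ : W), ε) =
      bPhi cs w (bPhi cs (cs.simple i) (bPhi cs w⁻¹ ((w * cs.simple i * w⁻¹ : W), ε))) := by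
    rw [← Equiv.Perm.mul_apply, ← Equiv.Perm.mul_apply, ← map_mul, ← map_mul]
  rw [e1, bPhi_apply cs w⁻¹]
  have e2 : w⁻¹ * (w * cs.simple i * w⁻¹) * w⁻¹⁻¹ = cs.simple i := by group
  rw [e2, bc_inv_conj, bPhi_simple]
  show bPhi cs w (cs.simple i * cs.simple i * cs.simple i,
      (ε + bc cs w (cs.simple i)) + bsgn (cs.simple i) (cs.simple i)) = _
  rw [bsgn_self, cs.simple_mul_simple_self, one_mul, bPhi_apply cs w]
  rw [Prod.mk.injEq]
  refine ⟨rfl, ?_⟩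
  have : ∀ a x : ZMod 2, a + x + 1 + x = a + 1 := by decide
  exact this ε (bc cs w (cs.simple i))

lemma bc_mul_reflection (w t : W) (ht : cs.IsReflection t) :
    bc cs (w * t) t = bc cs w t + 1 := by
  have h : bPhi cs (w * t) (t, 0) = bPhi cs w (bPhi cs t (t, 0)) := by
    rw [← Equiv.Perm.mul_apply, ← map_mul]
  rw [bPhi_reflection_self cs ht, zero_add, bPhi_apply cs w t 1] at h
  show (bPhi cs (w * t) (t, 0)).2 = bc cs w t + 1
  rw [h]
  exact add_comm 1 _

lemma length_mul_lt_of_bc_one {w t : W} (h : bc cs w t = 1) :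
    cs.length (w * t) < cs.length w := by
  obtain ⟨ω, hlen, hw⟩ := cs.exists_reduced_word w
  subst hw
  have hb : bsum t (cs.rightInvSeq ω) = 1 := by
    rw [← bc_wordProd]
    exact h
  have hmem : t ∈ cs.rightInvSeq ω := by
    by_contra hn
    rw [bsum_eq_zero hn] at hb
    exact absurd hb (by decide)
  obtain ⟨j, hj, hget⟩ := List.getElem_of_mem hmem
  have hj' : j < ω.length := by
    rwa [cs.length_rightInvSeq] at hj
  have key := cs.wordProd_mul_getD_rightInvSeq ω j
  rw [List.getD_eq_getElem _ _ hj, hget] at key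
  have h1 : cs.length (cs.wordProd (ω.eraseIdx j)) ≤ (ω.eraseIdx j).length :=
    cs.length_wordProd_le _
  have h2 : (ω.eraseIdx j).length + 1 = ω.length := List.length_eraseIdx_add_one hj'
  rw [key]
  have hlen' : cs.length (cs.wordProd ω) = ω.length := hlen
  omega

lemma bc_one_of_length_mul_lt {w t : W} (ht : cs.IsReflection t)
    (h : cs.length (w * t) < cs.length w) : bc cs w t = 1 := by
  rcases zmod2_cases (bc cs w t) with h0 | h1
  · exfalso
    have h2 : bc cs (w * t) t = 1 := by rw [bc_mul_reflection cs _ _ ht, h0, zero_add]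
    have h3 := length_mul_lt_of_bc_one cs h2
    rw [mul_assoc, ht.mul_self, mul_one] at h3
    omega
  · exact h1

/-- **Strong exchange property**, for arbitrary words. -/
theorem strong_exchange (ω : List B) {t : W} (ht : cs.IsReflection t)
    (h : cs.length (cs.wordProd ω * t) < cs.length (cs.wordProd ω)) :
    ∃ j < ω.length, cs.wordProd ω * t = cs.wordProd (ω.eraseIdx j) := by
  have h1 : bc cs (cs.wordProd ω) t = 1 := bc_one_of_length_mul_lt cs ht h
  rw [bc_wordProd] at h1
  have hmem : t ∈ cs.rightInvSeq ω := by
    by_contra hn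
    rw [bsum_eq_zero hn] at h1
    exact absurd h1 (by decide)
  obtain ⟨j, hj, hget⟩ := List.getElem_of_mem hmem
  have hj' : j < ω.length := by rwa [cs.length_rightInvSeq] at hj
  refine ⟨j, hj', ?_⟩
  have key := cs.wordProd_mul_getD_rightInvSeq ω j
  rw [List.getD_eq_getElem _ _ hj, hget] at key
  exact key

/-! #### Basic facts about Bruhat order -/

lemma le_of_step {u v : W} (t : W) (ht : cs.IsReflection t) (hv : v = u * t)
    (hl : cs.length u < cs.length v) : bruhatLE cs u v :=
  Relation.ReflTransGen.single ⟨⟨t, ht, hv⟩, hl⟩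

lemma le_refl (u : W) : bruhatLE cs u u := Relation.ReflTransGen.refl

lemma le_trans {u v w : W} (h1 : bruhatLE cs u v) (h2 : bruhatLE cs v w) :
    bruhatLE cs u w := Relation.ReflTransGen.trans h1 h2

lemma le_down_left (i : B) {u : W} (hd : cs.length (cs.simple i * u) < cs.length u) :
    bruhatLE cs (cs.simple i * u) u := by
  have ht : cs.IsReflection (u⁻¹ * cs.simple i * u) := by
    have := (cs.isReflection_simple i).conj u⁻¹
    rwa [inv_inv] at this
  have hv : u = (cs.simple i * u) * (u⁻¹ * cs.simple i * u) := by
    have he : (cs.simple i * u) * (u⁻¹ * cs.simple i * u) =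
        cs.simple i * (cs.simple i * u) := by group
    rw [he, cs.simple_mul_simple_cancel_left]
  exact le_of_step cs _ ht hv hd

lemma le_up_left (i : B) {u : W} (hd : cs.length u < cs.length (cs.simple i * u)) :
    bruhatLE cs u (cs.simple i * u) := by
  have ht : cs.IsReflection (u⁻¹ * cs.simple i * u) := by
    have := (cs.isReflection_simple i).conj u⁻¹
    rwa [inv_inv] at this
  exact le_of_step cs _ ht (by group) hd

lemma length_le_of_le {u w : W} (h : bruhatLE cs u w) : cs.length u ≤ cs.length w := by
  rw [bruhatLE_iff] at h
  induction h with
  | refl => exact Nat.le_refl _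
  | tail _ hbc ih => exact Nat.le_of_lt (Nat.lt_of_le_of_lt ih hbc.2)

lemma erase_le {ω : List B} (hω : cs.IsReduced ω) {j : ℕ} (hj : j < ω.length) :
    bruhatLE cs (cs.wordProd (ω.eraseIdx j)) (cs.wordProd ω) := by
  set t := (cs.rightInvSeq ω).getD j 1 with hterm
  have hjr : j < (cs.rightInvSeq ω).length := by rwa [cs.length_rightInvSeq]
  have htmem : t ∈ cs.rightInvSeq ω := by
    rw [hterm, List.getD_eq_getElem _ _ hjr]
    exact List.getElem_mem _
  have ht : cs.IsReflection t := cs.isReflection_of_mem_rightInvSeq ω htmem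
  have key : cs.wordProd ω * t = cs.wordProd (ω.eraseIdx j) :=
    cs.wordProd_mul_getD_rightInvSeq ω j
  have hstep : cs.wordProd ω = cs.wordProd (ω.eraseIdx j) * t := by
    rw [← key, mul_assoc, ht.mul_self, mul_one]
  apply le_of_step cs t ht hstep
  have h1 : cs.length (cs.wordProd (ω.eraseIdx j)) ≤ (ω.eraseIdx j).length :=
    cs.length_wordProd_le _
  have h2 : (ω.eraseIdx j).length + 1 = ω.length := List.length_eraseIdx_add_one hj
  have h3 : cs.length (cs.wordProd ω) = ω.length := hω
  omega

/-! #### The lifting property -/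

lemma lifting (i : B) : ∀ n : ℕ, ∀ w u : W, cs.length w = n → bruhatLE cs u w →
    (cs.length (cs.simple i * w) < cs.length w →
      bruhatLE cs (cs.simple i * u) w ∧
      (cs.length (cs.simple i * u) < cs.length u →
        bruhatLE cs (cs.simple i * u) (cs.simple i * w)) ∧
      (cs.length u < cs.length (cs.simple i * u) →
        bruhatLE cs u (cs.simple i * w))) ∧
    (cs.length w < cs.length (cs.simple i * w) →
      bruhatLE cs (cs.simple i * u) (cs.simple i * w)) := by
  intro n
  induction n using Nat.strong_induction_on with
  | _ n IH =>
  intro w u hn hle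
  rcases Relation.ReflTransGen.cases_tail hle with heq | ⟨v, huv, hstep⟩
  · subst heq
    exact ⟨fun hd => ⟨le_down_left cs i hd, fun _ => le_refl cs _,
      fun hu => absurd hd (Nat.lt_asymm hu)⟩, fun _ => le_refl cs _⟩
  · obtain ⟨⟨t, ht, hw⟩, hlen⟩ := hstep
    have hvw : bruhatLE cs v w := le_of_step cs t ht hw hlen
    have IHv := IH (cs.length v) (by omega) v u rfl huv
    rcases Nat.lt_or_gt_of_ne (cs.length_simple_mul_ne v i) with hsv | hsv
    · -- ℓ(s i v) < ℓ v
      obtain ⟨hAa, hAb, hAc⟩ := IHv.1 hsv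
      have hsv1 : cs.length (cs.simple i * v) + 1 = cs.length v := by
        rcases cs.length_simple_mul v i with h | h <;> omega
      constructor
      · intro hsw
        have hsw1 : cs.length (cs.simple i * w) + 1 = cs.length w := by
          rcases cs.length_simple_mul w i with h | h <;> omega
        have hstep2 : bruhatLE cs (cs.simple i * v) (cs.simple i * w) := by
          apply le_of_step cs t ht (by rw [hw]; group)
          omega
        exact ⟨le_trans cs hAa hvw, fun hsu => le_trans cs (hAb hsu) hstep2,
          fun hsu => le_trans cs (hAc hsu) hstep2⟩
      · intro hsw
        exact le_trans cs hAa (le_trans cs hvw (le_up_left cs i hsw))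
    · -- ℓ v < ℓ(s i v)
      have hdv : bruhatLE cs (cs.simple i * u) (cs.simple i * v) := IHv.2 hsv
      have hsv1 : cs.length (cs.simple i * v) = cs.length v + 1 := by
        rcases cs.length_simple_mul v i with h | h <;> omega
      constructor
      · intro hsw
        have hsw1 : cs.length (cs.simple i * w) + 1 = cs.length w := by
          rcases cs.length_simple_mul w i with h | h <;> omega
        -- build a reduced word for w starting with i
        obtain ⟨α, hα_len, hα⟩ := cs.exists_reduced_word (cs.simple i * w)
        have hw_pi : w = cs.wordProd (i :: α) := by
          rw [cs.wordProd_cons, ← hα, cs.simple_mul_simple_cancel_left]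
        have hαred : cs.IsReduced α := by
          show cs.length (cs.wordProd α) = α.length
          exact hα_len
        have hwt : w * t = v := by rw [hw, mul_assoc, ht.mul_self, mul_one]
        have hse : cs.length (cs.wordProd (i :: α) * t) < cs.length (cs.wordProd (i :: α)) := by
          rw [← hw_pi, hwt]
          exact hlen
        obtain ⟨j, hj, hjeq⟩ := strong_exchange cs (i :: α) ht hse
        rw [← hw_pi, hwt] at hjeq
        cases j with
        | zero =>
          -- v = s i * w
          have hv_eq : v = cs.simple i * w := by
            rw [hjeq]
            show cs.wordProd α = cs.simple i * w
            rw [← hα]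
          have hsv_eq : cs.simple i * v = w := by
            rw [hv_eq, cs.simple_mul_simple_cancel_left]
          have hswle : bruhatLE cs (cs.simple i * w) w := le_down_left cs i hsw
          refine ⟨?_, fun hsu => ?_, fun _ => ?_⟩
          · rcases Nat.lt_or_gt_of_ne (cs.length_simple_mul_ne u i) with hu1 | hu2
            · exact le_trans cs (le_down_left cs i hu1) (le_trans cs huv hvw)
            · rw [← hsv_eq]; exact hdv
          · rw [← hv_eq]
            exact le_trans cs (le_down_left cs i hsu) huv
          · rw [← hv_eq]
            exact huv
        | succ k =>
          have hk : k < α.length := by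
            simp only [List.length_cons] at hj
            omega
          have herase : (i :: α).eraseIdx (k + 1) = i :: α.eraseIdx k := rfl
          have hv_eq : v = cs.simple i * cs.wordProd (α.eraseIdx k) := by
            rw [hjeq, herase, cs.wordProd_cons]
          have hsv_eq : cs.simple i * v = cs.wordProd (α.eraseIdx k) := by
            rw [hv_eq, cs.simple_mul_simple_cancel_left]
          have hsvsw : bruhatLE cs (cs.simple i * v) (cs.simple i * w) := by
            rw [hsv_eq, hα]
            exact erase_le cs hαred hk
          have hvsv : bruhatLE cs v (cs.simple i * v) := le_up_left cs i hsv
          refine ⟨?_, fun hsu => ?_, fun _ => ?_⟩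
          · rcases Nat.lt_or_gt_of_ne (cs.length_simple_mul_ne u i) with hu1 | hu2
            · exact le_trans cs (le_down_left cs i hu1) (le_trans cs huv hvw)
            · exact le_trans cs hdv (le_trans cs hsvsw (le_down_left cs i hsw))
          · exact le_trans cs (le_down_left cs i hsu)
              (le_trans cs huv (le_trans cs hvsv hsvsw))
          · exact le_trans cs huv (le_trans cs hvsv hsvsw)
      · intro hsw
        have hstep2 : bruhatLE cs (cs.simple i * v) (cs.simple i * w) := by
          apply le_of_step cs t ht (by rw [hw]; group)
          omega
        exact le_trans cs hdv hstep2

/-! #### The deletion property -/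

lemma delete : ∀ ω : List B, ∃ ω', ω'.Sublist ω ∧ cs.IsReduced ω' ∧
    cs.wordProd ω' = cs.wordProd ω := by
  intro ω
  induction ω using List.reverseRecOn with
  | nil => exact ⟨[], List.Sublist.refl _, by simp [CoxeterSystem.IsReduced], rfl⟩
  | append_singleton α i ih =>
    obtain ⟨β, hsub, hred, hprod⟩ := ih
    rcases Nat.lt_or_gt_of_ne (cs.length_mul_simple_ne (cs.wordProd α) i) with hlt | hgt
    · have h2 : cs.length (cs.wordProd β * cs.simple i) < cs.length (cs.wordProd β) := by
        rw [hprod]; exact hlt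
      obtain ⟨j, hj, hje⟩ := strong_exchange cs β (cs.isReflection_simple i) h2
      refine ⟨β.eraseIdx j, ?_, ?_, ?_⟩
      · exact (List.eraseIdx_sublist β j).trans
          (hsub.trans (List.sublist_append_left α [i]))
      · show cs.length (cs.wordProd (β.eraseIdx j)) = (β.eraseIdx j).length
        rw [← hje]
        have hb : cs.length (cs.wordProd β) = β.length := hred
        have h3 : (β.eraseIdx j).length + 1 = β.length := List.length_eraseIdx_add_one hj
        have h4 : cs.length (cs.wordProd β * cs.simple i) + 1 = cs.length (cs.wordProd β) := by
          rcases cs.length_mul_simple (cs.wordProd β) i with h | h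
          · rw [hprod] at h; omega
          · omega
        omega
      · rw [← hje, hprod, cs.wordProd_append, cs.wordProd_singleton]
    · refine ⟨β ++ [i], hsub.append_right [i], ?_, ?_⟩
      · show cs.length (cs.wordProd (β ++ [i])) = (β ++ [i]).length
        rw [cs.wordProd_append, cs.wordProd_singleton, hprod]
        have hb : cs.length (cs.wordProd β) = β.length := hred
        have h4 : cs.length (cs.wordProd α * cs.simple i) = cs.length (cs.wordProd α) + 1 := by
          rcases cs.length_mul_simple (cs.wordProd α) i with h | h <;> omega
        rw [hprod] at hb
        simp only [List.length_append, List.length_singleton]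
        omega
      · simp [cs.wordProd_append, hprod]

/-! #### Parabolic subgroups -/

lemma mem_parabolic_iff (J : Set B) (u : W) :
    u ∈ parabolic cs J ↔ ∃ ω : List B, (∀ b ∈ ω, b ∈ J) ∧ cs.wordProd ω = u := by
  constructor
  · intro h
    induction h using Subgroup.closure_induction with
    | mem x hx =>
      obtain ⟨j, hjJ, rfl⟩ := hx
      exact ⟨[j], by simpa using hjJ, cs.wordProd_singleton j⟩
    | one => exact ⟨[], by simp, cs.wordProd_nil⟩
    | mul x y hx hy ihx ihy =>
      obtain ⟨ωx, hJx, rfl⟩ := ihx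
      obtain ⟨ωy, hJy, rfl⟩ := ihy
      refine ⟨ωx ++ ωy, ?_, cs.wordProd_append ωx ωy⟩
      intro b hb
      rcases List.mem_append.mp hb with h' | h'
      · exact hJx b h'
      · exact hJy b h'
    | inv x hx ihx =>
      obtain ⟨ωx, hJx, rfl⟩ := ihx
      refine ⟨ωx.reverse, ?_, cs.wordProd_reverse ωx⟩
      intro b hb
      exact hJx b (List.mem_reverse.mp hb)
  · rintro ⟨ω, hJ, rfl⟩
    have hwp : cs.wordProd ω = (List.map cs.simple ω).prod := rfl
    rw [hwp]
    apply Subgroup.list_prod_mem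
    intro x hx
    rw [List.mem_map] at hx
    obtain ⟨b, hb, rfl⟩ := hx
    exact Subgroup.subset_closure ⟨b, hJ b hb, rfl⟩

lemma parabolic_step_down {J : Set B} {z t : W} (hz : z ∈ parabolic cs J)
    (ht : cs.IsReflection t) (hlt : cs.length (z * t) < cs.length z) :
    z * t ∈ parabolic cs J := by
  obtain ⟨ω, hJ, rfl⟩ := (mem_parabolic_iff cs J z).mp hz
  obtain ⟨j, hj, hje⟩ := strong_exchange cs ω ht hlt
  rw [hje]
  exact (mem_parabolic_iff cs J _).mpr
    ⟨ω.eraseIdx j, fun b hb => hJ b ((List.eraseIdx_sublist ω j).subset hb), rfl⟩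

lemma parabolic_le_mem {J : Set B} {u z : W} (h : bruhatLE cs u z)
    (hz : z ∈ parabolic cs J) : u ∈ parabolic cs J := by
  have key : ∀ {a b : W}, Relation.ReflTransGen (brel cs) a b →
      b ∈ parabolic cs J → a ∈ parabolic cs J := by
    intro a b h
    induction h with
    | refl => exact id
    | @tail b c hab hbc ih =>
      intro hc
      obtain ⟨⟨t, ht, hceq⟩, hlen⟩ := hbc
      have hb_eq : b = c * t := by rw [hceq, mul_assoc, ht.mul_self, mul_one]
      have hb : b ∈ parabolic cs J := by
        rw [hb_eq]
        exact parabolic_step_down cs hc ht (by rw [← hb_eq]; exact hlen)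
      exact ih hb
  exact key ((bruhatLE_iff cs).mp h) hz

lemma parabolic_simple_mem {J : Set B} {i : B} (h : cs.simple i ∈ parabolic cs J) :
    cs.simple i ∈ cs.simple '' J := by
  obtain ⟨ω, hJ, hprod⟩ := (mem_parabolic_iff cs J _).mp h
  obtain ⟨β, hsub, hred, hβ⟩ := delete cs ω
  have hlen1 : β.length = 1 := by
    have h1 : cs.length (cs.wordProd β) = β.length := hred
    rw [hβ, hprod, cs.length_simple] at h1
    omega
  obtain ⟨j, rfl⟩ := List.length_eq_one_iff.mp hlen1
  have heq : cs.simple i = cs.simple j := by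
    rw [← hprod, ← hβ, cs.wordProd_singleton]
  exact ⟨j, hJ j (hsub.subset (by simp)), heq.symm⟩

lemma parabolic_mul_simple_left_mem {J : Set B} {u : W} {i : B}
    (hu : u ∈ parabolic cs J) (hd : cs.length (cs.simple i * u) < cs.length u) :
    cs.simple i * u ∈ parabolic cs J := by
  have ht : cs.IsReflection (u⁻¹ * cs.simple i * u) := by
    have := (cs.isReflection_simple i).conj u⁻¹
    rwa [inv_inv] at this
  have h1 : u * (u⁻¹ * cs.simple i * u) = cs.simple i * u := by group
  have h2 : cs.length (u * (u⁻¹ * cs.simple i * u)) < cs.length u := by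
    rw [h1]; exact hd
  have h3 := parabolic_step_down cs hu ht h2
  rwa [h1] at h3

lemma parabolic_left_descent {J : Set B} {u : W} {i : B}
    (hu : u ∈ parabolic cs J) (hd : cs.length (cs.simple i * u) < cs.length u) :
    cs.simple i ∈ cs.simple '' J := by
  have h3 : cs.simple i * u ∈ parabolic cs J := parabolic_mul_simple_left_mem cs hu hd
  have h4 : cs.simple i ∈ parabolic cs J := by
    have he : cs.simple i = (cs.simple i * u) * u⁻¹ := by group
    rw [he]
    exact mul_mem h3 (inv_mem hu)
  exact parabolic_simple_mem cs h4

/-! #### The main inductive argument -/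

lemma main_aux (J : Set B) : ∀ n : ℕ, ∀ w : W, cs.length w = n →
    ∃ z : W, z ∈ parabolic cs J ∧ bruhatLE cs z w ∧
      ∀ u : W, (u ∈ parabolic cs J ∧ bruhatLE cs u w) ↔ bruhatLE cs u z := by
  intro n
  induction n using Nat.strong_induction_on with
  | _ n IH =>
  intro w hn
  by_cases hw1 : w = 1
  · subst hw1
    refine ⟨1, one_mem _, le_refl cs 1, fun u => ⟨fun ⟨_, h⟩ => h, fun h => ⟨?_, h⟩⟩⟩
    have h1 : cs.length u ≤ cs.length (1 : W) := length_le_of_le cs h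
    rw [cs.length_one] at h1
    have h2 : u = 1 := cs.length_eq_zero_iff.mp (Nat.le_zero.mp h1)
    rw [h2]
    exact one_mem _
  · obtain ⟨i, hi⟩ := cs.exists_leftDescent_of_ne_one hw1
    have hlt : cs.length (cs.simple i * w) < cs.length w := hi
    have hww : cs.simple i * (cs.simple i * w) = w := cs.simple_mul_simple_cancel_left i
    obtain ⟨z', hz'P, hz'le, hz'iff⟩ := IH (cs.length (cs.simple i * w)) (by omega)
      (cs.simple i * w) rfl
    have hw'w : bruhatLE cs (cs.simple i * w) w := le_down_left cs i hlt
    have lift_w := fun (u : W) (hu : bruhatLE cs u w) =>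
      (lifting cs i (cs.length w) w u rfl hu).1 hlt
    by_cases hs : cs.simple i ∈ cs.simple '' J
    · rcases Nat.lt_or_gt_of_ne (cs.length_simple_mul_ne z' i) with hz1 | hz2
      · -- ℓ(s i z') < ℓ z' : take z := z'
        refine ⟨z', hz'P, le_trans cs hz'le hw'w, fun u =>
          ⟨fun ⟨huP, huw⟩ => ?_, fun h =>
            ⟨parabolic_le_mem cs h hz'P, le_trans cs h (le_trans cs hz'le hw'w)⟩⟩⟩
        obtain ⟨ha, hb, hc⟩ := lift_w u huw
        rcases Nat.lt_or_gt_of_ne (cs.length_simple_mul_ne u i) with hu1 | hu2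
        · have hsuP : cs.simple i * u ∈ parabolic cs J :=
            parabolic_mul_simple_left_mem cs huP hu1
          have h5 : bruhatLE cs (cs.simple i * u) z' :=
            (hz'iff (cs.simple i * u)).mp ⟨hsuP, hb hu1⟩
          have h6 := ((lifting cs i (cs.length z') z' (cs.simple i * u) rfl h5).1 hz1).1
          rwa [cs.simple_mul_simple_cancel_left] at h6
        · exact (hz'iff u).mp ⟨huP, hc hu2⟩
      · -- ℓ z' < ℓ(s i z') : take z := s i * z'
        have hsP : cs.simple i ∈ parabolic cs J := Subgroup.subset_closure hs
        have hzP : cs.simple i * z' ∈ parabolic cs J := mul_mem hsP hz'P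
        have hzw : bruhatLE cs (cs.simple i * z') w := by
          have h7 := (lifting cs i (cs.length (cs.simple i * w)) (cs.simple i * w) z'
            rfl hz'le).2 (by rw [hww]; exact hlt)
          rwa [hww] at h7
        have hz'z : bruhatLE cs z' (cs.simple i * z') := le_up_left cs i hz2
        refine ⟨cs.simple i * z', hzP, hzw, fun u =>
          ⟨fun ⟨huP, huw⟩ => ?_, fun h =>
            ⟨parabolic_le_mem cs h hzP, le_trans cs h hzw⟩⟩⟩
        obtain ⟨ha, hb, hc⟩ := lift_w u huw
        rcases Nat.lt_or_gt_of_ne (cs.length_simple_mul_ne u i) with hu1 | hu2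
        · have hsuP : cs.simple i * u ∈ parabolic cs J :=
            parabolic_mul_simple_left_mem cs huP hu1
          have h5 : bruhatLE cs (cs.simple i * u) z' :=
            (hz'iff (cs.simple i * u)).mp ⟨hsuP, hb hu1⟩
          have h6 := (lifting cs i (cs.length z') z' (cs.simple i * u) rfl h5).2 hz2
          rwa [cs.simple_mul_simple_cancel_left] at h6
        · exact le_trans cs ((hz'iff u).mp ⟨huP, hc hu2⟩) hz'z
    · -- s i not in the image of J
      refine ⟨z', hz'P, le_trans cs hz'le hw'w, fun u =>
        ⟨fun ⟨huP, huw⟩ => ?_, fun h =>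
          ⟨parabolic_le_mem cs h hz'P, le_trans cs h (le_trans cs hz'le hw'w)⟩⟩⟩
      obtain ⟨ha, hb, hc⟩ := lift_w u huw
      rcases Nat.lt_or_gt_of_ne (cs.length_simple_mul_ne u i) with hu1 | hu2
      · exact absurd (parabolic_left_descent cs huP hu1) hs
      · exact (hz'iff u).mp ⟨huP, hc hu2⟩

end CoxAux

/-- `W_J ∩ [e,w]` has a unique maximal element `w₀(J)`, and equals the lower Bruhat
interval `[e, w₀(J)]`. -/
theorem parabolic_inter_interval (J : Set B) (w : W) :
    ∃ z : W, z ∈ parabolic cs J ∧ bruhatLE cs z w ∧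
      ∀ u : W, (u ∈ parabolic cs J ∧ bruhatLE cs u w) ↔ bruhatLE cs u z :=
  CoxAux.main_aux cs J (cs.length w) w rfl
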